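/- Let k be a field, let R and R^∨ be k-vector spaces with a nondegenerate bilinear pairing ⟨·,·⟩ : R^∨ × R → k, and let V, W be k-vector spaces. Then the map D' : Hom(V, R ⊗ W) → Hom_rat(V ⊗ R^∨, W), sending a linear map f : V → R ⊗ W to D'(f) = (id_W ⊗ ⟨·,·⟩) ∘ τ ∘ (f ⊗ id_{R^∨}), where τ : R ⊗ W ⊗ R^∨ → W ⊗ R^∨ ⊗ R is the twist x ⊗ w ⊗ ξ ↦ w ⊗ ξ ⊗ x, is well defined and bijective. -/

import Mathlib

open TensorProduct

section

variable (k : Type*) [Field k] (R Rv V W : Type*)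
  [AddCommGroup R] [Module k R] [AddCommGroup Rv] [Module k Rv]
  [AddCommGroup V] [Module k V] [AddCommGroup W] [Module k W]

/-- The evaluation map `(R ⊗ W) →ₗ (R^∨ →ₗ W)`, `x ⊗ w ↦ (ξ ↦ ⟨ξ, x⟩ • w)`,
associated to a bilinear pairing `⟨·,·⟩ = B : R^∨ → R → k`. -/
noncomputable def pairingEval (B : Rv →ₗ[k] R →ₗ[k] k) :
    R ⊗[k] W →ₗ[k] (Rv →ₗ[k] W) :=
  TensorProduct.lift
    ((LinearMap.lflip : (Rv →ₗ[k] W →ₗ[k] W) ≃ₗ[k] (W →ₗ[k] Rv →ₗ[k] W)).toLinearMap ∘ₗ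
      (LinearMap.llcomp k Rv k (W →ₗ[k] W) (LinearMap.lsmul k W)) ∘ₗ B.flip)

lemma pairingEval_tmul (B : Rv →ₗ[k] R →ₗ[k] k) (x : R) (w : W) (ξ : Rv) :
    pairingEval k R Rv W B (x ⊗ₜ[k] w) ξ = B ξ x • w := by
  simp [pairingEval]

lemma pairingEval_injective (B : Rv →ₗ[k] R →ₗ[k] k)
    (hnd₂ : ∀ x : R, (∀ ξ : Rv, B ξ x = 0) → x = 0) :
    Function.Injective (pairingEval k R Rv W B) := by
  classical
  rw [← LinearMap.ker_eq_bot, Submodule.eq_bot_iff]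
  intro t ht
  rw [LinearMap.mem_ker] at ht
  set b := Module.Basis.ofVectorSpace k W
  set e : R ⊗[k] W ≃ₗ[k] (Module.Basis.ofVectorSpaceIndex k W →₀ R) :=
    (TensorProduct.congr (LinearEquiv.refl k R) b.repr) ≪≫ₗ
      (TensorProduct.finsuppScalarRight k k R _)
  have key : ∀ (s : R ⊗[k] W) (ξ : Rv) (i : Module.Basis.ofVectorSpaceIndex k W),
      B ξ (e s i) = b.coord i (pairingEval k R Rv W B s ξ) := by
    intro s
    induction s using TensorProduct.induction_on with
    | zero => simp
    | tmul x w =>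
        intro ξ i
        simp [e, TensorProduct.congr_tmul,
          TensorProduct.finsuppScalarRight_apply_tmul_apply,
          pairingEval_tmul, mul_comm]
    | add s₁ s₂ h₁ h₂ => intro ξ i; simp [map_add, h₁, h₂]
  have h0 : e t = 0 := by
    ext i
    exact hnd₂ _ (fun ξ => by rw [key t ξ i, ht]; simp)
  simpa using (LinearEquiv.map_eq_zero_iff e).mp h0

lemma pairingEval_surj_onto (B : Rv →ₗ[k] R →ₗ[k] k)
    (hnd₂ : ∀ x : R, (∀ ξ : Rv, B ξ x = 0) → x = 0)
    (h : Rv →ₗ[k] W) (E : Submodule k R) (hE : FiniteDimensional k E)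
    (hh : ∀ ξ : Rv, (∀ x ∈ E, B ξ x = 0) → h ξ = 0) :
    ∃ t : R ⊗[k] W, pairingEval k R Rv W B t = h := by
  classical
  -- the restriction map π : Rv →ₗ Dual E is surjective
  set π : Rv →ₗ[k] Module.Dual k E := (LinearMap.lcomp k k E.subtype) ∘ₗ B with hπdef
  have hπ : Function.Surjective π := by
    rw [← LinearMap.dualMap_injective_iff, ← LinearMap.ker_eq_bot,
      Submodule.eq_bot_iff]
    intro Φ hΦ
    rw [LinearMap.mem_ker] at hΦ
    set x := (Module.evalEquiv k E).symm Φ with hx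
    have hΦx : Φ = Module.Dual.eval k E x := by
      rw [hx, ← Module.evalEquiv_apply, LinearEquiv.apply_symm_apply]
    have hx0 : (x : R) = 0 := by
      refine hnd₂ _ (fun ξ => ?_)
      have := congrArg (fun F => F ξ) hΦ
      simpa [hΦx, π, Module.Dual.eval_apply] using this
    have : x = 0 := Subtype.ext hx0
    rw [hΦx, this]
    simp
  set bE := Module.finBasis k E
  choose ξv hξv using fun i => hπ (bE.coord i)
  refine ⟨∑ i, (bE i : R) ⊗ₜ[k] h (ξv i), ?_⟩
  ext ξ'
  have happ : ∀ i (y : E), B (ξv i) (y : R) = bE.repr y i := by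
    intro i y
    have := congrArg (fun F => F y) (hξv i)
    simpa [π, Module.Basis.coord_apply] using this
  set σ : Rv := ∑ i, B ξ' (bE i : R) • ξv i with hσ
  have hdiff : h ξ' = h σ := by
    have : h (ξ' - σ) = 0 := by
      refine hh _ (fun x hx => ?_)
      have hrep : (⟨x, hx⟩ : E) = ∑ i, bE.repr ⟨x, hx⟩ i • bE i :=
        (bE.sum_repr ⟨x, hx⟩).symm
      have hxeq : x = ∑ i, bE.repr ⟨x, hx⟩ i • (bE i : R) := by
        have := congrArg (Subtype.val) hrep
        rw [Submodule.coe_sum] at this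
        simp only [Submodule.coe_smul] at this
        exact this
      have h2 : ∀ i, B (ξv i) x = bE.repr ⟨x, hx⟩ i := fun i => happ i ⟨x, hx⟩
      have h1 : B ξ' x = ∑ i, bE.repr ⟨x, hx⟩ i * B ξ' ((bE i : R)) := by
        conv_lhs => rw [hxeq]
        rw [map_sum]
        simp [smul_eq_mul]
      have h3 : B σ x = ∑ i, B ξ' ((bE i : R)) * bE.repr ⟨x, hx⟩ i := by
        rw [hσ, map_sum, LinearMap.sum_apply]
        simp [h2, smul_eq_mul]
      rw [map_sub, LinearMap.sub_apply, h1, h3, sub_eq_zero]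
      exact Finset.sum_congr rfl fun i _ => mul_comm _ _
    have := sub_eq_zero.mp (by rwa [map_sub] at this)
    exact this
  rw [map_sum]
  simp only [LinearMap.sum_apply, pairingEval_tmul]
  rw [hdiff, hσ, map_sum]
  simp

/-- The map `D' : Hom(V, R ⊗ W) → Hom(V ⊗ R^∨, W)`,
`f ↦ (id_W ⊗ ⟨·,·⟩) ∘ τ ∘ (f ⊗ id_{R^∨})`, where `τ : R ⊗ W ⊗ R^∨ → W ⊗ R^∨ ⊗ R`
is the twist `x ⊗ w ⊗ ξ ↦ w ⊗ ξ ⊗ x`; on pure tensors,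
`D' f (v ⊗ ξ) = (id_W ⊗ ⟨·,·⟩)(τ(f v ⊗ ξ))`. -/
noncomputable def Dmap' (B : Rv →ₗ[k] R →ₗ[k] k) (f : V →ₗ[k] R ⊗[k] W) :
    V ⊗[k] Rv →ₗ[k] W :=
  TensorProduct.lift ((pairingEval k R Rv W B) ∘ₗ f)

/-- `g : V ⊗ R^∨ → W` is rational if every `v ∈ V` admits a finite-dimensional
subspace `E ⊆ R` with `g(v ⊗ ξ) = 0` for all `ξ ∈ ⊥E`. -/
def IsRatRight (B : Rv →ₗ[k] R →ₗ[k] k) (g : V ⊗[k] Rv →ₗ[k] W) : Prop :=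
  ∀ v : V, ∃ E : Submodule k R, FiniteDimensional k E ∧
    ∀ ξ : Rv, (∀ x ∈ E, B ξ x = 0) → g (v ⊗ₜ[k] ξ) = 0

/-- **Lemma (rationality, right version).** If the pairing `⟨·,·⟩ : R^∨ ⊗ R → k` is
nondegenerate, then `D' : Hom(V, R ⊗ W) → Hom_rat(V ⊗ R^∨, W)` is well defined
(it takes values in the rational homomorphisms) and bijective. -/
theorem dual_pair_rational_hom_right
    (B : Rv →ₗ[k] R →ₗ[k] k)
    (hnd₁ : ∀ ξ : Rv, (∀ x : R, B ξ x = 0) → ξ = 0)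
    (hnd₂ : ∀ x : R, (∀ ξ : Rv, B ξ x = 0) → x = 0) :
    (∀ f : V →ₗ[k] R ⊗[k] W, IsRatRight k R Rv V W B (Dmap' k R Rv V W B f)) ∧
    Function.Injective (Dmap' k R Rv V W B) ∧
    (∀ g : V ⊗[k] Rv →ₗ[k] W, IsRatRight k R Rv V W B g →
      ∃ f : V →ₗ[k] R ⊗[k] W, Dmap' k R Rv V W B f = g) := by
  classical
  have hinj := pairingEval_injective k R Rv W B hnd₂
  refine ⟨?_, ?_, ?_⟩
  · -- rationality
    intro f v
    obtain ⟨s, hs⟩ := TensorProduct.exists_finset (f v)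
    refine ⟨Submodule.span k (s.image Prod.fst : Set R), ?_, ?_⟩
    · exact FiniteDimensional.span_of_finite k (Finset.finite_toSet _)
    · intro ξ hξ
      have hz : ∀ p ∈ s, B ξ p.1 = 0 := fun p hp =>
        hξ p.1 (Submodule.subset_span (by simp; exact ⟨p.2, hp⟩))
      simp only [Dmap', TensorProduct.lift.tmul, LinearMap.coe_comp,
        Function.comp_apply, hs, map_sum]
      simp only [LinearMap.sum_apply, pairingEval_tmul]
      exact Finset.sum_eq_zero fun p hp => by rw [hz p hp, zero_smul]
  · -- injectivity
    intro f₁ f₂ h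
    ext v
    refine hinj (LinearMap.ext fun ξ => ?_)
    have := congrArg (fun m => m (v ⊗ₜ[k] ξ)) h
    simpa [Dmap', TensorProduct.lift.tmul] using this
  · -- surjectivity
    intro g hg
    have hmem : ∀ v : V, TensorProduct.curry g v ∈ LinearMap.range (pairingEval k R Rv W B) := by
      intro v
      obtain ⟨E, hE, hE'⟩ := hg v
      obtain ⟨t, ht⟩ := pairingEval_surj_onto k R Rv W B hnd₂
        (TensorProduct.curry g v) E hE
        (fun ξ hξ => by simpa [TensorProduct.curry_apply] using hE' ξ hξ)
      exact ⟨t, ht⟩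
    set f : V →ₗ[k] R ⊗[k] W :=
      (LinearEquiv.ofInjective _ hinj).symm.toLinearMap ∘ₗ
        (TensorProduct.curry g).codRestrict _ hmem with hf
    refine ⟨f, ?_⟩
    have hPf : ∀ v, pairingEval k R Rv W B (f v) = TensorProduct.curry g v := by
      intro v
      have := (LinearEquiv.ofInjective _ hinj).apply_symm_apply
        ⟨TensorProduct.curry g v, hmem v⟩
      have := congrArg Subtype.val this
      simpa [hf, LinearEquiv.ofInjective_apply] using this
    apply TensorProduct.ext'
    intro v ξ
    simp [Dmap', TensorProduct.lift.tmul, hPf, TensorProduct.curry_apply]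


end
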